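/- Let p be an odd prime, s, m ≥ 1 with p^m ≡ 3 (mod 4), α a nonzero non-square in F_{p^m}, β ∈ F_{p^m} nonzero, R = F_{p^m}[u]/⟨u²⟩, and α₀ ∈ F_{p^m} with α₀^{p^s} = α. In the ring 𝓡 = R[x]/⟨x^{4p^s} - (α+βu)⟩, the element x^4 - α₀ is nilpotent with nilpotency index exactly 2p^s, and the ideal generated by (x^4-α₀)^{p^s} equals the ideal generated by u. -/

import Mathlib

open Polynomial

/-- The chain ring `R = F_{p^m}[u]/⟨u²⟩`. -/
abbrev Ru (K : Type) [Field K] : Type := K[X] ⧸ Ideal.span {(X : K[X]) ^ 2}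

noncomputable instance (K : Type) [Field K] : CommRing (Ru K) := Ideal.Quotient.commRing _

/-- The element `u` of `R`. -/
noncomputable def uR (K : Type) [Field K] : Ru K :=
  Ideal.Quotient.mk _ (X : K[X])

/-- The natural inclusion of `F_{p^m}` into `R`. -/
noncomputable def tR (K : Type) [Field K] (a : K) : Ru K :=
  Ideal.Quotient.mk _ (C a : K[X])

/-- The ambient ring `R[x]/⟨xⁿ - λ⟩` of `λ`-constacyclic codes of length `n` over `R`. -/
abbrev RC (K : Type) [Field K] (lam : Ru K) (n : ℕ) : Type :=
  (Ru K)[X] ⧸ Ideal.span {(X : (Ru K)[X]) ^ n - C lam}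

/-- The canonical projection `R[x] → R[x]/⟨xⁿ - λ⟩`. -/
noncomputable def mkC (K : Type) [Field K] (lam : Ru K) (n : ℕ) :
    (Ru K)[X] →+* RC K lam n :=
  Ideal.Quotient.mk _

theorem stmt9 (p s m : ℕ) (hp : p.Prime) (hodd : Odd p) (hs : 0 < s) (hm : 0 < m)
    (K : Type) [Field K] [Fintype K] (hK : Fintype.card K = p ^ m)
    (h3 : p ^ m % 4 = 3) (α β : K) (hα : α ≠ 0) (hns : ¬ IsSquare α) (hβ : β ≠ 0)
    (α₀ : K) (hα₀ : α₀ ^ p ^ s = α) :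
    (mkC K (tR K α + tR K β * uR K) (4 * p ^ s)
        (X ^ 4 - C (tR K α₀)) ^ (2 * p ^ s) = 0) ∧
    (mkC K (tR K α + tR K β * uR K) (4 * p ^ s)
        (X ^ 4 - C (tR K α₀)) ^ (2 * p ^ s - 1) ≠ 0) ∧
    Ideal.span {mkC K (tR K α + tR K β * uR K) (4 * p ^ s)
        ((X ^ 4 - C (tR K α₀)) ^ p ^ s)} =
      Ideal.span {mkC K (tR K α + tR K β * uR K) (4 * p ^ s) (C (uR K))} := by
  haveI : Fact p.Prime := ⟨hp⟩
  have hps : 0 < p ^ s := pow_pos hp.pos s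
  -- characteristic of K is p
  have hpK : (p : K) = 0 := by
    have h1 : ((Fintype.card K : ℕ) : K) = 0 := Nat.cast_card_eq_zero K
    rw [hK] at h1
    push_cast at h1
    exact pow_eq_zero_iff (by omega) |>.mp h1
  haveI hcharK : CharP K p := (CharP.charP_iff_prime_eq_zero hp).2 hpK
  -- the ring hom K →+* Ru K
  set f : K →+* Ru K := (Ideal.Quotient.mk (Ideal.span {(X : K[X]) ^ 2})).comp Polynomial.C
    with hf
  have hfeq : ∀ a : K, tR K a = f a := fun a => rfl
  have hfinj : Function.Injective f := by
    rw [injective_iff_map_eq_zero]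
    intro a ha
    have : (C a : K[X]) ∈ Ideal.span {(X : K[X]) ^ 2} := by
      rwa [← Ideal.Quotient.eq_zero_iff_mem]
    rw [Ideal.mem_span_singleton] at this
    by_contra hne
    have hd : (C a : K[X]).degree < ((X : K[X]) ^ 2).degree := by
      rw [degree_C hne, degree_X_pow]; exact WithBot.coe_lt_coe.mpr (by norm_num)
    exact hne (by simpa using Polynomial.eq_zero_of_dvd_of_degree_lt this hd)
  haveI hntRu : Nontrivial (Ru K) := by
    refine nontrivial_of_ne (f 1) (f 0) ?_
    exact fun h => one_ne_zero (hfinj h)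
  haveI : CharP (Ru K) p := by
    have := charP_of_injective_ringHom hfinj p
    simpa using this
  haveI : CharP ((Ru K)[X]) p := Polynomial.instCharP p
  -- basic abbreviations
  set lam : Ru K := tR K α + tR K β * uR K with hlam
  set n : ℕ := 4 * p ^ s with hn
  set Q : (Ru K)[X] →+* RC K lam n := mkC K lam n with hQ
  set g : (Ru K)[X] := X ^ 4 - C (tR K α₀) with hg
  have hu2 : uR K ^ 2 = 0 := by
    show (Ideal.Quotient.mk (Ideal.span {(X : K[X]) ^ 2})) X ^ 2 = 0
    rw [← map_pow, Ideal.Quotient.eq_zero_iff_mem]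
    exact Ideal.subset_span rfl
  -- Frobenius computation
  have hfrob : g ^ p ^ s = X ^ n - C (tR K α) := by
    rw [hg, sub_pow_char_pow, ← pow_mul, ← map_pow, ← hn, hfeq α₀, ← map_pow, hα₀, ← hfeq]
  -- X^n = C lam in the quotient
  have hXn : Q (X ^ n) = Q (C lam) := by
    rw [hQ, mkC]
    rw [Ideal.Quotient.mk_eq_mk_iff_sub_mem]
    exact Ideal.subset_span rfl
  have hkey : Q (g ^ p ^ s) = Q (C (tR K β * uR K)) := by
    rw [hfrob, map_sub, hXn, ← map_sub, ← C_sub]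
    congr 2
    rw [hlam]; ring
  -- Part 1
  have part1 : Q (g ^ (2 * p ^ s)) = 0 := by
    have : g ^ (2 * p ^ s) = (g ^ p ^ s) ^ 2 := by rw [← pow_mul, mul_comm]
    rw [this, map_pow, hkey, ← map_pow, ← C_pow, mul_pow, hu2, mul_zero, C_0, map_zero]
  -- the image of tR K β is a unit
  have hunit : IsUnit (tR K β) := by
    refine IsUnit.of_mul_eq_one (tR K β⁻¹) ?_
    rw [hfeq, hfeq, ← map_mul, mul_inv_cancel₀ hβ, map_one]
  -- tR K β * uR K ≠ 0
  have hbu : tR K β * uR K ≠ 0 := by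
    intro h
    have h' : (Ideal.Quotient.mk (Ideal.span {(X : K[X]) ^ 2})) (C β * X) = 0 := by
      rw [map_mul]; exact h
    rw [Ideal.Quotient.eq_zero_iff_mem, Ideal.mem_span_singleton] at h'
    have hne : (C β * X : K[X]) ≠ 0 := by
      intro hz
      apply hβ
      have := congrArg (fun q => Polynomial.coeff q 1) hz
      simpa using this
    have hd : (C β * X : K[X]).degree < ((X : K[X]) ^ 2).degree := by
      rw [degree_C_mul_X hβ, degree_X_pow]
      exact WithBot.coe_lt_coe.mpr (by norm_num)
    exact hne (Polynomial.eq_zero_of_dvd_of_degree_lt h' hd)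
  -- Part 2
  have hmonicg : (g : (Ru K)[X]).Monic := by
    rw [hg]; exact monic_X_pow_sub_C _ (by norm_num)
  have hmonicgk : ((g : (Ru K)[X]) ^ (p ^ s - 1)).Monic := hmonicg.pow _
  have hdeg4 : (g : (Ru K)[X]).natDegree = 4 := by
    rw [hg]; exact natDegree_X_pow_sub_C
  have hdeggk : ((g : (Ru K)[X]) ^ (p ^ s - 1)).natDegree = 4 * (p ^ s - 1) := by
    rw [hmonicg.natDegree_pow, hdeg4, mul_comm]
  have part2 : Q (g ^ (2 * p ^ s - 1)) ≠ 0 := by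
    have hsplit : g ^ (2 * p ^ s - 1) = g ^ p ^ s * g ^ (p ^ s - 1) := by
      rw [← pow_add]; congr 1; omega
    rw [hsplit, map_mul, hkey, ← map_mul]
    intro h0
    rw [hQ, mkC, Ideal.Quotient.eq_zero_iff_mem, Ideal.mem_span_singleton] at h0
    set h : (Ru K)[X] := C (tR K β * uR K) * g ^ (p ^ s - 1) with hh
    have hne : h ≠ 0 := by
      intro hz
      apply hbu
      have := congrArg (fun q => Polynomial.coeff q (4 * (p ^ s - 1))) hz
      simp only [hh, coeff_C_mul, coeff_zero] at this
      rwa [← hdeggk, ← Polynomial.leadingCoeff, hmonicgk.leadingCoeff, mul_one] at this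
    have hmonicn : ((X : (Ru K)[X]) ^ n - C lam).Monic :=
      monic_X_pow_sub_C _ (by omega)
    refine hmonicn.not_dvd_of_degree_lt hne ?_ h0
    have hd1 : (h : (Ru K)[X]).degree ≤ (4 * (p ^ s - 1) : ℕ) := by
      calc (h : (Ru K)[X]).degree ≤ (C (tR K β * uR K)).degree
            + ((g : (Ru K)[X]) ^ (p ^ s - 1)).degree := degree_mul_le _ _
        _ ≤ 0 + (4 * (p ^ s - 1) : ℕ) := by
            refine add_le_add degree_C_le ?_
            rw [Polynomial.degree_eq_natDegree hmonicgk.ne_zero, hdeggk]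
        _ = (4 * (p ^ s - 1) : ℕ) := by rw [zero_add]
    calc (h : (Ru K)[X]).degree ≤ (4 * (p ^ s - 1) : ℕ) := hd1
      _ < (n : ℕ) := by
          rw [Nat.cast_lt (α := WithBot ℕ)] <;> omega
      _ = ((X : (Ru K)[X]) ^ n - C lam).degree := (degree_X_pow_sub_C (by omega) _).symm
  -- Part 3
  have part3 : Ideal.span {Q (g ^ p ^ s)} = Ideal.span {Q (C (uR K))} := by
    rw [hkey, C_mul, map_mul]
    exact Ideal.span_singleton_mul_left_unit (hunit.map (Q.comp Polynomial.C)) _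
  refine ⟨part1, part2, part3⟩
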